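/- If every word accepted by a multistack automaton has its every stack-h call matched within k maximal stack-h contexts (is k-scoped), then the Kleene star of the language of well-matched such words is also k-scoped: (L ∩ WellMatched)* ⊆ k-scoped words. -/

import Mathlib

open Computability

inductive SymKind : Type
  | call | ret | intern
deriving DecidableEq

/-- Stack-semantics matching for stack `h`: scan the word left-to-right,
ignoring all symbols not belonging to stack `h`, pushing call positions of
stack `h` and popping on return positions of stack `h`. -/
def mpairsH {σ : Type*} {n : ℕ} (st : σ → Fin n) (kind : σ → SymKind) (h : Fin n) :
    List σ → ℕ → List ℕ → List (ℕ × ℕ)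
  | [], _, _ => []
  | a :: rest, i, stk =>
    if st a = h then
      match kind a with
      | SymKind.call => mpairsH st kind h rest (i + 1) (i :: stk)
      | SymKind.ret =>
        match stk with
        | [] => mpairsH st kind h rest (i + 1) []
        | c :: stk' => (c, i) :: mpairsH st kind h rest (i + 1) stk'
      | SymKind.intern => mpairsH st kind h rest (i + 1) stk
    else mpairsH st kind h rest (i + 1) stk

/-- `i` and `j` are a matched call–return pair of stack `h` in `w`. -/
def MatchedH {σ : Type*} {n : ℕ} (st : σ → Fin n) (kind : σ → SymKind)
    (h : Fin n) (w : List σ) (i j : ℕ) : Prop :=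
  (i, j) ∈ mpairsH st kind h w 0 []

/-- Position `p` starts a maximal stack-`h` context of `w`. -/
def StartsCtx {σ : Type*} {n : ℕ} (st : σ → Fin n) (h : Fin n) (w : List σ)
    (p : ℕ) : Prop :=
  (∃ a, w[p]? = some a ∧ st a = h) ∧
  (p = 0 ∨ ∀ b, w[p - 1]? = some b → st b ≠ h)

/-- Index (counting from 1) of the maximal stack-`h` context containing or
preceding position `i`: the number of maximal stack-`h` contexts starting at
or before `i`. -/
noncomputable def ctxIdx {σ : Type*} {n : ℕ} (st : σ → Fin n) (h : Fin n)
    (w : List σ) (i : ℕ) : ℕ :=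
  Nat.card {p : ℕ // p ≤ i ∧ StartsCtx st h w p}

/-- `w` is `k`-scoped: every matched return of stack `h` lies within at most
`k` maximal stack-`h` contexts from the one containing its call (inclusive). -/
def KScoped {σ : Type*} {n : ℕ} (st : σ → Fin n) (kind : σ → SymKind) (k : ℕ)
    (w : List σ) : Prop :=
  ∀ (h : Fin n) (i j : ℕ), MatchedH st kind h w i j →
    ctxIdx st h w j < ctxIdx st h w i + k


/-- `w` is well-matched: for every stack, every call position has a matching
return and every return position has a matching call. -/
def WellMatchedAll {σ : Type*} {n : ℕ} (st : σ → Fin n) (kind : σ → SymKind)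
    (w : List σ) : Prop :=
  ∀ h : Fin n,
    (∀ i a, w[i]? = some a → st a = h → kind a = SymKind.call →
      ∃ j, MatchedH st kind h w i j) ∧
    (∀ j a, w[j]? = some a → st a = h → kind a = SymKind.ret →
      ∃ i, MatchedH st kind h w i j)

/-- The language of well-matched words of `L`. -/
def wmLang {σ : Type*} {n : ℕ} (st : σ → Fin n) (kind : σ → SymKind)
    (L : Language σ) : Language σ :=
  {w | w ∈ L ∧ WellMatchedAll st kind w}

namespace KS

variable {σ : Type*} {n : ℕ} (st : σ → Fin n) (kind : σ → SymKind) (h : Fin n)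

def stkAfter : List σ → ℕ → List ℕ → List ℕ
  | [], _, stk => stk
  | a :: rest, i, stk =>
    if st a = h then
      match kind a with
      | SymKind.call => stkAfter rest (i + 1) (i :: stk)
      | SymKind.ret =>
        match stk with
        | [] => stkAfter rest (i + 1) []
        | _ :: stk' => stkAfter rest (i + 1) stk'
      | SymKind.intern => stkAfter rest (i + 1) stk
    else stkAfter rest (i + 1) stk

theorem mpairsH_append : ∀ (u v : List σ) (i : ℕ) (stk : List ℕ),
    mpairsH st kind h (u ++ v) i stk =
      mpairsH st kind h u i stk ++
        mpairsH st kind h v (i + u.length) (stkAfter st kind h u i stk)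
  | [], v, i, stk => by simp [mpairsH, stkAfter]
  | a :: rest, v, i, stk => by
    by_cases hs : st a = h
    · cases hk : kind a
      · simp only [List.cons_append, mpairsH, stkAfter, hs, hk, if_true, List.append_eq]
        rw [mpairsH_append rest v (i+1) (i :: stk)]
        simp [Nat.add_comm, Nat.add_assoc, Nat.add_left_comm]
      · cases stk with
        | nil =>
          simp only [List.cons_append, mpairsH, stkAfter, hs, hk, if_true, List.append_eq]
          rw [mpairsH_append rest v (i+1) []]
          simp [Nat.add_comm, Nat.add_assoc, Nat.add_left_comm]
        | cons c stk' =>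
          simp only [List.cons_append, mpairsH, stkAfter, hs, hk, if_true, List.append_eq]
          rw [mpairsH_append rest v (i+1) stk']
          simp [Nat.add_comm, Nat.add_assoc, Nat.add_left_comm]
      · simp only [List.cons_append, mpairsH, stkAfter, hs, hk, if_true, List.append_eq]
        rw [mpairsH_append rest v (i+1) stk]
        simp [Nat.add_comm, Nat.add_assoc, Nat.add_left_comm]
    · simp only [List.cons_append, mpairsH, stkAfter, hs, if_false, List.append_eq]
      rw [mpairsH_append rest v (i+1) stk]
      simp [Nat.add_comm, Nat.add_assoc, Nat.add_left_comm]


/-- `u` scans correctly from stack height `s`, never popping below 0, ending at 0. -/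
def Bal : ℕ → List σ → Prop
  | s, [] => s = 0
  | s, a :: rest =>
    if st a = h then
      match kind a with
      | SymKind.call => Bal (s + 1) rest
      | SymKind.ret => s ≠ 0 ∧ Bal (s - 1) rest
      | SymKind.intern => Bal s rest
    else Bal s rest

theorem bal_run : ∀ (u : List σ) (i : ℕ) (top stk : List ℕ),
    Bal st kind h top.length u →
    mpairsH st kind h u i (top ++ stk) = mpairsH st kind h u i top ∧
      stkAfter st kind h u i (top ++ stk) = stk
  | [], i, top, stk, hb => by
    have : top = [] := List.length_eq_zero_iff.mp hb
    subst this; simp [mpairsH, stkAfter]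
  | a :: rest, i, top, stk, hb => by
    by_cases hs : st a = h
    · cases hk : kind a
      · simp only [Bal, hs, hk, if_true] at hb
        have := bal_run rest (i + 1) (i :: top) stk (by simpa using hb)
        simp only [mpairsH, stkAfter, hs, hk, if_true]
        simpa using this
      · simp only [Bal, hs, hk, if_true] at hb
        obtain ⟨hne, hb'⟩ := hb
        obtain ⟨c, top', rfl⟩ : ∃ c top', top = c :: top' := by
          cases top with
          | nil => simp at hne
          | cons c t => exact ⟨c, t, rfl⟩
        have := bal_run rest (i + 1) top' stk (by simpa using hb')
        simp only [mpairsH, stkAfter, hs, hk, if_true, List.cons_append]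
        exact ⟨by rw [this.1], this.2⟩
      · simp only [Bal, hs, hk, if_true] at hb
        have := bal_run rest (i + 1) top stk hb
        simp only [mpairsH, stkAfter, hs, hk, if_true]
        exact this
    · simp only [Bal, hs, if_false] at hb
      have := bal_run rest (i + 1) top stk hb
      simp only [mpairsH, stkAfter, hs, if_false]
      exact this

theorem bal_nil : Bal st kind h 0 ([] : List σ) := rfl

theorem bal_append : ∀ (u : List σ) (s : ℕ) (v : List σ),
    Bal st kind h s u → Bal st kind h 0 v → Bal st kind h s (u ++ v)
  | [], s, v, hu, hv => by
    have : s = 0 := hu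
    subst this; simpa using hv
  | a :: rest, s, v, hu, hv => by
    by_cases hs : st a = h
    · cases hk : kind a <;>
        simp only [Bal, hs, hk, if_true, List.cons_append] at hu ⊢
      · exact bal_append rest _ v hu hv
      · exact ⟨hu.1, bal_append rest _ v hu.2 hv⟩
      · exact bal_append rest _ v hu hv
    · simp only [Bal, hs, if_false, List.cons_append] at hu ⊢
      exact bal_append rest _ v hu hv

theorem mpairsH_shift : ∀ (v : List σ) (i d : ℕ) (stk : List ℕ),
    mpairsH st kind h v (i + d) (stk.map (· + d)) =
      (mpairsH st kind h v i stk).map (fun p => (p.1 + d, p.2 + d))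
  | [], i, d, stk => by simp [mpairsH]
  | a :: rest, i, d, stk => by
    by_cases hs : st a = h
    · cases hk : kind a
      · simp only [mpairsH, hs, hk, if_true]
        have := mpairsH_shift rest (i + 1) d (i :: stk)
        simp only [List.map_cons] at this
        rw [show i + d + 1 = i + 1 + d by omega, this]
      · cases stk with
        | nil =>
          simp only [mpairsH, hs, hk, if_true, List.map_nil]
          rw [show i + d + 1 = i + 1 + d by omega,
            show ([] : List ℕ) = List.map (· + d) [] by simp,
            mpairsH_shift rest (i + 1) d []]
          simp
        | cons c stk' =>
          simp only [mpairsH, hs, hk, if_true, List.map_cons]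
          rw [show i + d + 1 = i + 1 + d by omega, mpairsH_shift rest (i + 1) d stk']
      · simp only [mpairsH, hs, hk, if_true]
        rw [show i + d + 1 = i + 1 + d by omega, mpairsH_shift rest (i + 1) d stk]
    · simp only [mpairsH, hs, if_false]
      rw [show i + d + 1 = i + 1 + d by omega, mpairsH_shift rest (i + 1) d stk]

theorem mpairsH_bounds : ∀ (u : List σ) (i : ℕ) (stk : List ℕ) (a b : ℕ),
    (∀ c ∈ stk, c < i) → (a, b) ∈ mpairsH st kind h u i stk →
    a < b ∧ b < i + u.length
  | [], i, stk, a, b, hstk, hm => by simp [mpairsH] at hm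
  | x :: rest, i, stk, a, b, hstk, hm => by
    by_cases hs : st x = h
    · cases hk : kind x
      · simp only [mpairsH, hs, hk, if_true] at hm
        have := mpairsH_bounds rest (i + 1) (i :: stk) a b
          (by intro c hc; rcases List.mem_cons.mp hc with hc | hc; · omega
              · exact lt_trans (hstk c hc) (by omega)) hm
        simp only [List.length_cons]; omega
      · cases stk with
        | nil =>
          simp only [mpairsH, hs, hk, if_true] at hm
          have := mpairsH_bounds rest (i + 1) [] a b (by simp) hm
          simp only [List.length_cons]; omega
        | cons c stk' =>
          simp only [mpairsH, hs, hk, if_true, List.mem_cons] at hm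
          rcases hm with hm | hm
          · have hc : c < i := hstk c (by simp)
            have : a = c ∧ b = i := (Prod.mk.injEq _ _ _ _).mp hm
            simp only [List.length_cons]; omega
          · have := mpairsH_bounds rest (i + 1) stk' a b
              (by intro d hd; exact lt_trans (hstk d (by simp [hd])) (by omega)) hm
            simp only [List.length_cons]; omega
      · simp only [mpairsH, hs, hk, if_true] at hm
        have := mpairsH_bounds rest (i + 1) stk a b
          (by intro c hc; exact lt_trans (hstk c hc) (by omega)) hm
        simp only [List.length_cons]; omega
    · simp only [mpairsH, hs, if_false] at hm
      have := mpairsH_bounds rest (i + 1) stk a b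
        (by intro c hc; exact lt_trans (hstk c hc) (by omega)) hm
      simp only [List.length_cons]; omega


def isCall (a : σ) : Bool := decide (st a = h ∧ kind a = SymKind.call)
def isRet (a : σ) : Bool := decide (st a = h ∧ kind a = SymKind.ret)

theorem len_lemma : ∀ (u : List σ) (i : ℕ) (stk : List ℕ),
    (stkAfter st kind h u i stk).length + (mpairsH st kind h u i stk).length
      = stk.length + u.countP (isCall st kind h)
  | [], i, stk => by simp [mpairsH, stkAfter]
  | a :: rest, i, stk => by
    by_cases hs : st a = h
    · cases hk : kind a
      · have IH := len_lemma rest (i + 1) (i :: stk)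
        simp only [List.length_cons] at IH
        simp [mpairsH, stkAfter, List.countP_cons, isCall, hs, hk]
        omega
      · cases stk with
        | nil =>
          have IH := len_lemma rest (i + 1) ([] : List ℕ)
          simp only [List.length_nil] at IH
          simp [mpairsH, stkAfter, List.countP_cons, isCall, hs, hk]
          omega
        | cons c stk' =>
          have IH := len_lemma rest (i + 1) stk'
          simp [mpairsH, stkAfter, List.countP_cons, isCall, hs, hk]
          omega
      · have IH := len_lemma rest (i + 1) stk
        simp [mpairsH, stkAfter, List.countP_cons, isCall, hs, hk]
        omega
    · have IH := len_lemma rest (i + 1) stk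
      simp [mpairsH, stkAfter, List.countP_cons, isCall, hs]
      omega

theorem len_le_ret : ∀ (u : List σ) (i : ℕ) (stk : List ℕ),
    (mpairsH st kind h u i stk).length ≤ u.countP (isRet st kind h)
  | [], i, stk => by simp [mpairsH]
  | a :: rest, i, stk => by
    by_cases hs : st a = h
    · cases hk : kind a
      · have IH := len_le_ret rest (i + 1) (i :: stk)
        simp [mpairsH, List.countP_cons, isRet, hs, hk]
        omega
      · cases stk with
        | nil =>
          have IH := len_le_ret rest (i + 1) ([] : List ℕ)
          simp [mpairsH, List.countP_cons, isRet, hs, hk]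
          omega
        | cons c stk' =>
          have IH := len_le_ret rest (i + 1) stk'
          simp [mpairsH, List.countP_cons, isRet, hs, hk]
          omega
      · have IH := len_le_ret rest (i + 1) stk
        simp [mpairsH, List.countP_cons, isRet, hs, hk]
        omega
    · have IH := len_le_ret rest (i + 1) stk
      simp [mpairsH, List.countP_cons, isRet, hs]
      omega

theorem bal_of_counts : ∀ (u : List σ) (i : ℕ) (stk : List ℕ),
    (mpairsH st kind h u i stk).length = u.countP (isRet st kind h) →
    (stkAfter st kind h u i stk).length = 0 →
    Bal st kind h stk.length u
  | [], i, stk, hP, hA => by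
    simp only [stkAfter] at hA
    exact hA
  | a :: rest, i, stk, hP, hA => by
    by_cases hs : st a = h
    · cases hk : kind a
      · simp [mpairsH, stkAfter, List.countP_cons, isRet, hs, hk] at hP hA
        simp only [Bal, hs, hk, if_true]
        have hb := bal_of_counts rest (i + 1) (i :: stk) hP (by simp [hA])
        simpa using hb
      · cases stk with
        | nil =>
          exfalso
          have hle := len_le_ret st kind h rest (i + 1) ([] : List ℕ)
          simp [mpairsH, List.countP_cons, isRet, hs, hk] at hP
          omega
        | cons c stk' =>
          simp [mpairsH, stkAfter, List.countP_cons, isRet, hs, hk] at hP hA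
          simp only [Bal, hs, hk, if_true]
          refine ⟨by simp, ?_⟩
          have hb := bal_of_counts rest (i + 1) stk' (by omega) (by simp [hA])
          simpa using hb
      · simp [mpairsH, stkAfter, List.countP_cons, isRet, hs, hk] at hP hA
        simp only [Bal, hs, hk, if_true]
        exact bal_of_counts rest (i + 1) stk hP (by simp [hA])
    · simp [mpairsH, stkAfter, List.countP_cons, isRet, hs] at hP hA
      simp only [Bal, hs, if_false]
      exact bal_of_counts rest (i + 1) stk hP (by simp [hA])


theorem ncard_pos (q : σ → Prop) [DecidablePred q] :
    ∀ u : List σ, {p : ℕ | ∃ a, u[p]? = some a ∧ q a}.ncard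
      = u.countP fun a => decide (q a)
  | [] => by
    have : {p : ℕ | ∃ a, ([] : List σ)[p]? = some a ∧ q a} = ∅ := by
      ext p; simp
    simp [this]
  | a :: rest => by
    have hfin : {p : ℕ | ∃ b, rest[p]? = some b ∧ q b}.Finite := by
      apply Set.Finite.subset (Set.finite_Iio rest.length)
      rintro p ⟨b, hb, -⟩
      simpa using (List.getElem?_eq_some_iff.mp hb).1
    have IH := ncard_pos q rest
    by_cases ha : q a
    · have hset : {p : ℕ | ∃ b, (a :: rest)[p]? = some b ∧ q b}
          = insert 0 (Nat.succ '' {p : ℕ | ∃ b, rest[p]? = some b ∧ q b}) := by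
        ext p
        cases p with
        | zero => simp [ha]
        | succ p =>
          simp only [Set.mem_setOf_eq, List.getElem?_cons_succ, Set.mem_insert_iff,
            Set.mem_image]
          constructor
          · rintro h'
            exact Or.inr ⟨p, h', rfl⟩
          · rintro (h' | ⟨x, hx, hxe⟩)
            · omega
            · obtain rfl : x = p := Nat.succ_injective hxe
              exact hx
      rw [hset, Set.ncard_insert_of_notMem (by simp) (hfin.image _),
        Set.ncard_image_of_injective _ Nat.succ_injective, IH]
      simp [List.countP_cons, ha, Nat.add_comm]
    · have hset : {p : ℕ | ∃ b, (a :: rest)[p]? = some b ∧ q b}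
          = Nat.succ '' {p : ℕ | ∃ b, rest[p]? = some b ∧ q b} := by
        ext p
        cases p with
        | zero => simp [ha]
        | succ p =>
          simp only [Set.mem_setOf_eq, List.getElem?_cons_succ, Set.mem_image]
          constructor
          · rintro h'
            exact ⟨p, h', rfl⟩
          · rintro ⟨x, hx, hxe⟩
            obtain rfl : x = p := Nat.succ_injective hxe
            exact hx
      rw [hset, Set.ncard_image_of_injective _ Nat.succ_injective, IH]
      simp [List.countP_cons, ha]

theorem pairs_ncard_le (u : List σ) :
    {x : ℕ × ℕ | x ∈ mpairsH st kind h u 0 []}.ncard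
      ≤ (mpairsH st kind h u 0 []).length := by
  classical
  have hT : {x : ℕ × ℕ | x ∈ mpairsH st kind h u 0 []}
      = ↑(mpairsH st kind h u 0 []).toFinset := by
    ext x; simp
  rw [hT, Set.ncard_coe_finset]
  exact List.toFinset_card_le _

theorem countC_le (u : List σ)
    (hwm : ∀ i a, u[i]? = some a → st a = h → kind a = SymKind.call →
      ∃ j, (i, j) ∈ mpairsH st kind h u 0 []) :
    u.countP (isCall st kind h) ≤ (mpairsH st kind h u 0 []).length := by
  classical
  have hq := ncard_pos (fun a => st a = h ∧ kind a = SymKind.call) u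
  have hic : isCall st kind h = fun a => decide (st a = h ∧ kind a = SymKind.call) := rfl
  rw [hic, ← hq]
  have hTfin : {x : ℕ × ℕ | x ∈ mpairsH st kind h u 0 []}.Finite :=
    (mpairsH st kind h u 0 []).finite_toSet
  refine le_trans ?_ (pairs_ncard_le st kind h u)
  refine Set.ncard_le_ncard_of_injOn
    (fun p => (p, if hp : ∃ j, (p, j) ∈ mpairsH st kind h u 0 [] then hp.choose else 0))
    ?_ ?_ hTfin
  · rintro p ⟨a, ha, h1, h2⟩
    have hex := hwm p a ha h1 h2
    simp only [Set.mem_setOf_eq, dif_pos hex]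
    exact hex.choose_spec
  · intro p _ q _ hpq
    exact congrArg Prod.fst hpq

theorem countR_le (u : List σ)
    (hwm : ∀ j a, u[j]? = some a → st a = h → kind a = SymKind.ret →
      ∃ i, (i, j) ∈ mpairsH st kind h u 0 []) :
    u.countP (isRet st kind h) ≤ (mpairsH st kind h u 0 []).length := by
  classical
  have hq := ncard_pos (fun a => st a = h ∧ kind a = SymKind.ret) u
  have hic : isRet st kind h = fun a => decide (st a = h ∧ kind a = SymKind.ret) := rfl
  rw [hic, ← hq]
  have hTfin : {x : ℕ × ℕ | x ∈ mpairsH st kind h u 0 []}.Finite :=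
    (mpairsH st kind h u 0 []).finite_toSet
  refine le_trans ?_ (pairs_ncard_le st kind h u)
  refine Set.ncard_le_ncard_of_injOn
    (fun p => ((if hp : ∃ i, (i, p) ∈ mpairsH st kind h u 0 [] then hp.choose else 0), p))
    ?_ ?_ hTfin
  · rintro p ⟨a, ha, h1, h2⟩
    have hex := hwm p a ha h1 h2
    simp only [Set.mem_setOf_eq, dif_pos hex]
    exact hex.choose_spec
  · intro p _ q _ hpq
    exact congrArg Prod.snd hpq

theorem bal_of_wm (u : List σ)
    (hc : ∀ i a, u[i]? = some a → st a = h → kind a = SymKind.call →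
      ∃ j, (i, j) ∈ mpairsH st kind h u 0 [])
    (hr : ∀ j a, u[j]? = some a → st a = h → kind a = SymKind.ret →
      ∃ i, (i, j) ∈ mpairsH st kind h u 0 []) :
    Bal st kind h 0 u := by
  have h1 := len_lemma st kind h u 0 []
  have h2 := len_le_ret st kind h u 0 []
  have h3 := countC_le st kind h u hc
  have h4 := countR_le st kind h u hr
  simp only [List.length_nil, Nat.zero_add] at h1
  have hb := bal_of_counts st kind h u 0 [] (le_antisymm h2 h4) (by omega)
  simpa using hb



variable {σ : Type*} {n : ℕ} (st : σ → Fin n) (kind : σ → SymKind) (h : Fin n)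

theorem ctxIdx_eq_ncard (w : List σ) (i : ℕ) :
    ctxIdx st h w i = {p : ℕ | p ≤ i ∧ StartsCtx st h w p}.ncard :=
  Nat.card_coe_set_eq _

theorem ctxSet_finite (w : List σ) (i j : ℕ) :
    {p : ℕ | i < p ∧ p ≤ j ∧ StartsCtx st h w p}.Finite :=
  Set.Finite.subset (Set.finite_Iic j) (fun p hp => hp.2.1)

theorem ctxIdx_split (w : List σ) (i j : ℕ) (hij : i ≤ j) :
    ctxIdx st h w j = ctxIdx st h w i
      + {p : ℕ | i < p ∧ p ≤ j ∧ StartsCtx st h w p}.ncard := by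
  rw [ctxIdx_eq_ncard, ctxIdx_eq_ncard]
  have hA : {p : ℕ | p ≤ i ∧ StartsCtx st h w p}.Finite :=
    Set.Finite.subset (Set.finite_Iic i) (fun p hp => hp.1)
  have hB := ctxSet_finite st h w i j
  have hun : {p : ℕ | p ≤ j ∧ StartsCtx st h w p}
      = {p : ℕ | p ≤ i ∧ StartsCtx st h w p}
        ∪ {p : ℕ | i < p ∧ p ≤ j ∧ StartsCtx st h w p} := by
    ext p
    simp only [Set.mem_setOf_eq, Set.mem_union]
    constructor
    · rintro ⟨hpj, hS⟩
      by_cases hpi : p ≤ i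
      · exact Or.inl ⟨hpi, hS⟩
      · exact Or.inr ⟨by omega, hpj, hS⟩
    · rintro (⟨hpi, hS⟩ | ⟨_, hpj, hS⟩)
      · exact ⟨le_trans hpi hij, hS⟩
      · exact ⟨hpj, hS⟩
  rw [hun, Set.ncard_union_eq ?_ hA hB]
  rw [Set.disjoint_left]
  rintro p ⟨hpi, -⟩ ⟨hip, -⟩
  omega

theorem ctx_transfer {k : ℕ} (w x : List σ) (off i' j' : ℕ) (hij : i' ≤ j')
    (hS : ∀ p, off + i' < p → p ≤ off + j' → StartsCtx st h w p →
      StartsCtx st h x (p - off))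
    (hx : ctxIdx st h x j' < ctxIdx st h x i' + k) :
    ctxIdx st h w (off + j') < ctxIdx st h w (off + i') + k := by
  have hsx := ctxIdx_split st h x i' j' hij
  have hsw := ctxIdx_split st h w (off + i') (off + j') (by omega)
  have hle : {p : ℕ | off + i' < p ∧ p ≤ off + j' ∧ StartsCtx st h w p}.ncard
      ≤ {p : ℕ | i' < p ∧ p ≤ j' ∧ StartsCtx st h x p}.ncard := by
    refine Set.ncard_le_ncard_of_injOn (fun p => p - off) ?_ ?_ (ctxSet_finite st h x i' j')
    · rintro p ⟨h1, h2, h3⟩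
      refine ⟨?_, ?_, hS p h1 h2 h3⟩ <;> omega
    · rintro p ⟨h1, -⟩ q ⟨h2, -⟩ hpq
      simp only at hpq
      omega
  omega

theorem startsCtx_left (u v : List σ) (p : ℕ) (hp : 0 < p) (hplen : p < u.length)
    (hS : StartsCtx st h (u ++ v) p) : StartsCtx st h u p := by
  obtain ⟨⟨a, ha, hst⟩, hprev⟩ := hS
  constructor
  · refine ⟨a, ?_, hst⟩
    rwa [List.getElem?_append_left hplen] at ha
  · right
    intro b hb
    rcases hprev with h0 | hprev
    · omega
    · exact hprev b (by rwa [List.getElem?_append_left (by omega)])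

theorem startsCtx_right (u v : List σ) (p : ℕ) (hp : u.length < p)
    (hS : StartsCtx st h (u ++ v) p) : StartsCtx st h v (p - u.length) := by
  obtain ⟨⟨a, ha, hst⟩, hprev⟩ := hS
  constructor
  · refine ⟨a, ?_, hst⟩
    rwa [List.getElem?_append_right (by omega)] at ha
  · right
    intro b hb
    rcases hprev with h0 | hprev
    · omega
    · refine hprev b ?_
      rw [List.getElem?_append_right (by omega)]
      rw [show p - 1 - u.length = p - u.length - 1 by omega]
      exact hb

theorem kscoped_append (k : ℕ) (u v : List σ)
    (hbu : ∀ h : Fin n, Bal st kind h 0 u)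
    (hku : KScoped st kind k u) (hkv : KScoped st kind k v) :
    KScoped st kind k (u ++ v) := by
  intro h i j hm
  have hrun := bal_run st kind h u 0 [] [] (hbu h)
  simp only [List.nil_append] at hrun
  have haft : stkAfter st kind h u 0 [] = [] := hrun.2
  have hshift := mpairsH_shift st kind h v 0 u.length []
  simp only [List.map_nil, Nat.zero_add] at hshift
  have hm2 : (i, j) ∈ mpairsH st kind h (u ++ v) 0 [] := hm
  rw [mpairsH_append, haft, Nat.zero_add, hshift, List.mem_append] at hm2
  rcases hm2 with hm | hm
  · -- pair inside u
    have hb := mpairsH_bounds st kind h u 0 [] i j (by simp) hm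
    have hlt : i < j := hb.1
    have hjlen : j < u.length := by have := hb.2; omega
    have hx := hku h i j hm
    have := ctx_transfer st h (u ++ v) u 0 i j (le_of_lt hlt) ?_ hx
    · simpa using this
    · intro p h1 h2 h3
      simp only [Nat.zero_add] at h1 h2
      have := startsCtx_left st h u v p (by omega) (by omega) h3
      simpa using this
  · -- pair inside v, shifted
    simp only [List.mem_map] at hm
    obtain ⟨⟨i', j'⟩, hm', heq⟩ := hm
    have heq1 : i' + u.length = i := congrArg Prod.fst heq
    have heq2 : j' + u.length = j := congrArg Prod.snd heq
    have hb := mpairsH_bounds st kind h v 0 [] i' j' (by simp) hm'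
    have hx := hkv h i' j' hm'
    have := ctx_transfer st h (u ++ v) v u.length i' j' (le_of_lt hb.1) ?_ hx
    · rw [show u.length + j' = j by omega, show u.length + i' = i by omega] at this
      exact this
    · intro p h1 h2 h3
      exact startsCtx_right st h u v p (by omega) h3

theorem kscoped_nil (k : ℕ) : KScoped st kind k ([] : List σ) := by
  intro h i j hm
  simp [MatchedH, mpairsH] at hm

end KS

/-- If every word of `L` is `k`-scoped, then every word of the Kleene star of
the language of well-matched words of `L` is `k`-scoped. -/

theorem kstar_kscoped {σ : Type*} {n : ℕ} (st : σ → Fin n)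
    (kind : σ → SymKind) (k : ℕ) (L : Language σ)
    (hL : ∀ w ∈ L, KScoped st kind k w) :
    ∀ w ∈ (wmLang st kind L)∗, KScoped st kind k w := by
  intro w hw
  rw [Language.mem_kstar] at hw
  obtain ⟨S, rfl, hS⟩ := hw
  suffices hmain : (∀ h : Fin n, KS.Bal st kind h 0 S.flatten) ∧ KScoped st kind k S.flatten
    from hmain.2
  induction S with
  | nil =>
    exact ⟨fun h => KS.bal_nil st kind h, KS.kscoped_nil st kind k⟩
  | cons u S IH =>
    obtain ⟨huL, huWM⟩ := hS u (by simp)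
    have IH' := IH (fun y hy => hS y (by simp [hy]))
    have hbu : ∀ h : Fin n, KS.Bal st kind h 0 u := fun h =>
      KS.bal_of_wm st kind h u (huWM h).1 (huWM h).2
    have hku : KScoped st kind k u := hL u huL
    refine ⟨fun h => KS.bal_append st kind h u 0 S.flatten (hbu h) (IH'.1 h), ?_⟩
    exact KS.kscoped_append st kind k u S.flatten hbu hku IH'.2
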